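/- Let (S,T) be an atomic isometric representation of F_θ^+ on H with standard basis {ξ_t}, and let η be a standard basis vector. Then η is a wandering vector for (S,T) if and only if none of the following four conditions holds: (W1) S_uη ∈ 𝕋η for some nonempty word u over {1,…,m}; (W2) T_vη ∈ 𝕋η for some nonempty word v over {1,…,n}; (W3) T_vS_uη ∈ 𝕋η for some nonempty words u, v; (W4) S_uη ∈ 𝕋T_vη for some nonempty words u, v. -/

import Mathlib

noncomputable section

open scoped InnerProductSpace ComplexInnerProductSpace Classical

section GeneralDefs

variable {E : Type*} [NormedAddCommGroup E] [InnerProductSpace ℂ E]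

/-- The operator associated to a word: `wordOp V [a₁, …, a_r] = V a₁ * ⋯ * V a_r`. -/
def wordOp {ι : Type*} (V : ι → E →L[ℂ] E) (w : List ι) : E →L[ℂ] E :=
  (w.map V).prod

/-- The operator associated to a word of fixed length `k` given as a function `Fin k → ι`. -/
def fnWordOp {ι : Type*} {k : ℕ} (V : ι → E →L[ℂ] E) (u : Fin k → ι) : E →L[ℂ] E :=
  wordOp V (List.ofFn u)

/-- The closure of a set of operators in the weak operator topology, described via
basic WOT-neighbourhoods (finitely many vector functionals). -/
def wotClosure (S : Set (E →L[ℂ] E)) : Set (E →L[ℂ] E) :=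
  {A | ∀ ε > (0 : ℝ), ∀ F : Finset (E × E), ∃ B ∈ S, ∀ p ∈ F, ‖⟪p.1, (A - B) p.2⟫‖ < ε}

/-- The unital WOT-closed algebra generated by a set of operators. -/
def genWotAlg (G : Set (E →L[ℂ] E)) : Set (E →L[ℂ] E) :=
  wotClosure ((Algebra.adjoin ℂ G : Subalgebra ℂ (E →L[ℂ] E)) : Set (E →L[ℂ] E))

/-- A wandering vector for a row-isometry `V = [V_a : a ∈ ι]`: a unit vector whose orbit
under all words in the `V_a` is an orthonormal family. -/
def IsWandering {ι : Type*} (V : ι → E →L[ℂ] E) (ζ : E) : Prop :=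
  ‖ζ‖ = 1 ∧ ∀ w w' : List ι,
    ⟪wordOp V w ζ, wordOp V w' ζ⟫ = if w = w' then 1 else 0

/-- Restriction of an operator to an invariant subspace (junk value `0` if not invariant). -/
def restrictCLM (A : E →L[ℂ] E) (M : Submodule ℂ E) : M →L[ℂ] M :=
  if h : ∀ x ∈ M, A x ∈ M then
    { toFun := fun x => ⟨A x, h x x.2⟩
      map_add' := by intro x y; ext; simp
      map_smul' := by intro c x; ext; simp
      cont := Continuous.subtype_mk (A.continuous.comp continuous_subtype_val) _ }
  else 0

/-- The unital WOT-closed algebra on `M` generated by the restrictions of the `V a` to `M`. -/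
def rowAlgOn {ι : Type*} (V : ι → E →L[ℂ] E) (M : Submodule ℂ E) : Set (M →L[ℂ] M) :=
  genWotAlg (Set.range fun a => restrictCLM (V a) M)

/-- The unital WOT-closed algebra on `M` generated by the restrictions of the `V a`
is self-adjoint. -/
def restrictedAlgSelfAdjoint {ι : Type*} (V : ι → E →L[ℂ] E) (M : Submodule ℂ E) : Prop :=
  ∀ A ∈ rowAlgOn V M, ∃ B ∈ rowAlgOn V M,
    ∀ x y : M, ⟪((A x : M) : E), (y : E)⟫ = ⟪(x : E), ((B y : M) : E)⟫

variable [CompleteSpace E]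

/-- A row-isometry is of dilation type if it is defect free and has no nonzero reducing
subspace on which it is either absolutely continuous (spanned by wandering vectors) or
singular (generating a self-adjoint WOT-closed algebra). -/
def IsDilationType {ι : Type*} [Fintype ι] (V : ι → E →L[ℂ] E) : Prop :=
  (∑ a, V a * star (V a)) = 1 ∧
    ¬ ∃ M : Submodule ℂ E, M ≠ ⊥ ∧ IsClosed (M : Set E) ∧
      (∀ a, ∀ x ∈ M, V a x ∈ M) ∧ (∀ a, ∀ x ∈ M, star (V a) x ∈ M) ∧
      ((M = (Submodule.span ℂ {ζ : E | ζ ∈ M ∧ IsWandering V ζ}).topologicalClosure) ∨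
        restrictedAlgSelfAdjoint V M)

end GeneralDefs

section Aux
variable {E : Type*} [NormedAddCommGroup E] [InnerProductSpace ℂ E]
variable {ι : Type*} (V : ι → E →L[ℂ] E)

lemma wordOp_nil : wordOp V ([] : List ι) = 1 := rfl

lemma wordOp_cons (i : ι) (w : List ι) : wordOp V (i :: w) = V i * wordOp V w := by
  simp [wordOp]

lemma wordOp_append (a b : List ι) : wordOp V (a ++ b) = wordOp V a * wordOp V b := by
  simp [wordOp]

lemma wordOp_append_apply (a b : List ι) (x : E) :
    wordOp V (a ++ b) x = wordOp V a (wordOp V b x) := by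
  rw [wordOp_append]; rfl

variable [CompleteSpace E] [DecidableEq ι] (hiso : ∀ i i', star (V i) * V i' = if i = i' then 1 else 0)

include hiso in
lemma star_wordOp_mul (w : List ι) : star (wordOp V w) * wordOp V w = 1 := by
  induction w with
  | nil => simp [wordOp]
  | cons i w ih =>
    rw [wordOp_cons, star_mul, mul_assoc, ← mul_assoc (star (V i)), hiso i i,
      if_pos rfl, one_mul, ih]

include hiso in
lemma star_word_apply (w : List ι) (x : E) : star (wordOp V w) (wordOp V w x) = x := by
  have h := congrArg (fun A => (A : E →L[ℂ] E) x) (star_wordOp_mul V hiso w)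
  simpa using h

include hiso in
lemma word_inj {w : List ι} {x y : E} (h : wordOp V w x = wordOp V w y) : x = y := by
  have := congrArg (fun z => (star (wordOp V w) : E →L[ℂ] E) z) h
  rwa [star_word_apply V hiso, star_word_apply V hiso] at this

include hiso in
lemma word_ne_zero {w : List ι} {x : E} (hx : x ≠ 0) : wordOp V w x ≠ 0 := by
  intro h
  exact hx (word_inj V hiso (by simpa using h))

include hiso in
lemma word_inner (w : List ι) (x y : E) :
    ⟪wordOp V w x, wordOp V w y⟫_ℂ = ⟪x, y⟫_ℂ := by
  have h : ⟪x, star (wordOp V w) (wordOp V w y)⟫_ℂ = ⟪wordOp V w x, wordOp V w y⟫_ℂ := by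
    rw [ContinuousLinearMap.star_eq_adjoint]
    exact ContinuousLinearMap.adjoint_inner_right _ _ _
  rw [← h, star_word_apply V hiso]

include hiso in
lemma star_apply_single (i i' : ι) (x : E) :
    star (V i) (V i' x) = if i = i' then x else 0 := by
  have h := congrArg (fun A => (A : E →L[ℂ] E) x) (hiso i i')
  simp only [ContinuousLinearMap.mul_apply] at h
  split_ifs with hii <;> simp_all

include hiso in
lemma word_prefix : ∀ (u u' : List ι) (x y : E), x ≠ 0 →
    wordOp V u x = wordOp V u' y → u <+: u' ∨ u' <+: u := by
  intro u
  induction u with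
  | nil => intro u' x y _ _; exact Or.inl (List.nil_prefix)
  | cons i u ih =>
    intro u' x y hx h
    cases u' with
    | nil => exact Or.inr (List.nil_prefix)
    | cons i' u'' =>
      rw [wordOp_cons, wordOp_cons] at h
      simp only [ContinuousLinearMap.mul_apply] at h
      have h2 := congrArg (fun z => (star (V i) : E →L[ℂ] E) z) h
      rw [star_apply_single V hiso i i, if_pos rfl, star_apply_single V hiso i i'] at h2
      by_cases hii : i = i'
      · subst hii
        rw [if_pos rfl] at h2
        rcases ih u'' x y hx h2 with hp | hp
        · exact Or.inl (List.cons_prefix_cons.mpr ⟨rfl, hp⟩)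
        · exact Or.inr (List.cons_prefix_cons.mpr ⟨rfl, hp⟩)
      · rw [if_neg hii] at h2
        exact absurd h2 (word_ne_zero V hiso hx)

end Aux


/-- An isometric representation of the single-vertex 2-graph `F_θ⁺` on a Hilbert space `H`. -/
structure TwoGraphRep (m n : ℕ) (θ : Equiv.Perm (Fin m × Fin n)) (H : Type*)
    [NormedAddCommGroup H] [InnerProductSpace ℂ H] [CompleteSpace H] where
  S : Fin m → H →L[ℂ] H
  T : Fin n → H →L[ℂ] H
  isometS : ∀ i i', star (S i) * S i' = if i = i' then 1 else 0
  isometT : ∀ j j', star (T j) * T j' = if j = j' then 1 else 0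
  comm : ∀ i j, S i * T j = T (θ (i, j)).2 * S (θ (i, j)).1

namespace TwoGraphRep

variable {m n : ℕ} {θ : Equiv.Perm (Fin m × Fin n)} {H : Type*}
  [NormedAddCommGroup H] [InnerProductSpace ℂ H] [CompleteSpace H]

/-- A representation is of Cuntz type if both row-isometries are defect free. -/
def CuntzType (ρ : TwoGraphRep m n θ H) : Prop :=
  (∑ i, ρ.S i * star (ρ.S i)) = 1 ∧ (∑ j, ρ.T j * star (ρ.T j)) = 1

/-- The nonself-adjoint 2-graph algebra `𝔖`: the unital WOT-closed algebra generated by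
the `S_i` and `T_j`. -/
def alg (ρ : TwoGraphRep m n θ H) : Set (H →L[ℂ] H) :=
  genWotAlg (Set.range ρ.S ∪ Set.range ρ.T)

/-- The von Neumann algebra generated by the `S_i` and `T_j`: the WOT-closure of the
unital *-algebra they generate. -/
def vnAlg (ρ : TwoGraphRep m n θ H) : Set (H →L[ℂ] H) :=
  genWotAlg ((Set.range ρ.S ∪ Set.range ρ.T) ∪ star '' (Set.range ρ.S ∪ Set.range ρ.T))

/-- Wandering vector for the row-isometry `[S_u T_v : |u| = k, |v| = l]`. -/
def IsWanderingKL (ρ : TwoGraphRep m n θ H) (k l : ℕ) (ζ : H) : Prop :=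
  ‖ζ‖ = 1 ∧ ∀ (p p' : ℕ) (u u' : List (Fin m)) (v v' : List (Fin n)),
    u.length = p * k → v.length = p * l → u'.length = p' * k → v'.length = p' * l →
    ⟪(wordOp ρ.S u * wordOp ρ.T v) ζ, (wordOp ρ.S u' * wordOp ρ.T v') ζ⟫ =
      if u = u' ∧ v = v' then 1 else 0

/-- The range of the structure projection `P_{k,l}`: the orthogonal complement of the
closed linear span of the wandering vectors of `[S_u T_v : |u| = k, |v| = l]`. -/
def structSpaceKL (ρ : TwoGraphRep m n θ H) (k l : ℕ) : Submodule ℂ H :=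
  ((Submodule.span ℂ {ζ : H | ρ.IsWanderingKL k l ζ}).topologicalClosure)ᗮ

/-- The range of the first structure projection `P = ⋀_{k,l>0} P_{k,l}`. -/
def firstStructSpace (ρ : TwoGraphRep m n θ H) : Submodule ℂ H :=
  ⨅ (k : ℕ) (l : ℕ) (_ : 0 < k) (_ : 0 < l), ρ.structSpaceKL k l

/-- The row-isometry `[S_u T_v : |u| = k, |v| = l]`. -/
def rowKL (ρ : TwoGraphRep m n θ H) (k l : ℕ) :
    ((Fin k → Fin m) × (Fin l → Fin n)) → H →L[ℂ] H :=
  fun p => fnWordOp ρ.S p.1 * fnWordOp ρ.T p.2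

/-- A wandering vector for the representation `(S,T)`. -/
def IsWanderingRep (ρ : TwoGraphRep m n θ H) (ζ : H) : Prop :=
  ‖ζ‖ = 1 ∧ ∀ (u u' : List (Fin m)) (v v' : List (Fin n)),
    ⟪(wordOp ρ.S u * wordOp ρ.T v) ζ, (wordOp ρ.S u' * wordOp ρ.T v') ζ⟫ =
      if u = u' ∧ v = v' then 1 else 0

/-- The representation is irreducible: the only closed subspaces invariant under all
`S_i, T_j, S_i*, T_j*` are `⊥` and `⊤`. -/
def Irreducible (ρ : TwoGraphRep m n θ H) : Prop :=
  ∀ M : Submodule ℂ H, IsClosed (M : Set H) →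
    (∀ i, ∀ x ∈ M, ρ.S i x ∈ M) → (∀ i, ∀ x ∈ M, star (ρ.S i) x ∈ M) →
    (∀ j, ∀ x ∈ M, ρ.T j x ∈ M) → (∀ j, ∀ x ∈ M, star (ρ.T j) x ∈ M) →
    M = ⊥ ∨ M = ⊤

/-- The representation is atomic with standard basis `ξ`: every generator maps each basis
vector to a unimodular multiple of a basis vector. -/
def AtomicBasis {Λ : Type*} (ρ : TwoGraphRep m n θ H) (ξ : HilbertBasis Λ ℂ H) : Prop :=
  (∀ i t, ∃ (c : ℂ) (t' : Λ), ‖c‖ = 1 ∧ ρ.S i (ξ t) = c • ξ t') ∧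
  (∀ j t, ∃ (c : ℂ) (t' : Λ), ‖c‖ = 1 ∧ ρ.T j (ξ t) = c • ξ t')

/-- `x` has a blue ring: `S_u x ∈ 𝕋x` for some nonempty word `u`. -/
def HasBlueRing (ρ : TwoGraphRep m n θ H) (x : H) : Prop :=
  ∃ u : List (Fin m), u ≠ [] ∧ ∃ c : ℂ, ‖c‖ = 1 ∧ wordOp ρ.S u x = c • x

/-- `x` has a red ring: `T_v x ∈ 𝕋x` for some nonempty word `v`. -/
def HasRedRing (ρ : TwoGraphRep m n θ H) (x : H) : Prop :=
  ∃ v : List (Fin n), v ≠ [] ∧ ∃ c : ℂ, ‖c‖ = 1 ∧ wordOp ρ.T v x = c • x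

/-- `x` has a mixed ring: `T_v S_u x ∈ 𝕋x` for some nonempty words `u`, `v`. -/
def HasMixedRing (ρ : TwoGraphRep m n θ H) (x : H) : Prop :=
  ∃ (u : List (Fin m)) (v : List (Fin n)), u ≠ [] ∧ v ≠ [] ∧
    ∃ c : ℂ, ‖c‖ = 1 ∧ wordOp ρ.T v (wordOp ρ.S u x) = c • x

end TwoGraphRep

section RepAux

variable {m n : ℕ} {θ : Equiv.Perm (Fin m × Fin n)} {H : Type*}
  [NormedAddCommGroup H] [InnerProductSpace ℂ H] [CompleteSpace H]
  (ρ : TwoGraphRep m n θ H)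

lemma swap1TS : ∀ (v : List (Fin n)) (i : Fin m), ∃ (i' : Fin m) (v' : List (Fin n)),
    v'.length = v.length ∧ wordOp ρ.T v * ρ.S i = ρ.S i' * wordOp ρ.T v' := by
  intro v
  induction v with
  | nil => exact fun i => ⟨i, [], rfl, by simp [wordOp_nil]⟩
  | cons j v ih =>
    intro i
    obtain ⟨i₁, v₁, hlen, h1⟩ := ih i
    set p := θ.symm (i₁, j) with hp
    have hc : ρ.S p.1 * ρ.T p.2 = ρ.T j * ρ.S i₁ := by
      have h := ρ.comm p.1 p.2
      simp only [Prod.mk.eta, hp, Equiv.apply_symm_apply] at h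
      exact h
    refine ⟨p.1, p.2 :: v₁, by simp [hlen], ?_⟩
    rw [wordOp_cons, wordOp_cons, mul_assoc, h1, ← mul_assoc, ← hc, mul_assoc]

lemma swapTS : ∀ (u : List (Fin m)) (v : List (Fin n)),
    ∃ (u' : List (Fin m)) (v' : List (Fin n)),
    u'.length = u.length ∧ v'.length = v.length ∧
    wordOp ρ.T v * wordOp ρ.S u = wordOp ρ.S u' * wordOp ρ.T v' := by
  intro u
  induction u with
  | nil => exact fun v => ⟨[], v, rfl, rfl, by simp [wordOp_nil]⟩
  | cons i u ih =>
    intro v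
    obtain ⟨i', v', hlen', h1⟩ := swap1TS ρ v i
    obtain ⟨u'', v'', hl1, hl2, h2⟩ := ih v'
    refine ⟨i' :: u'', v'', by simp [hl1], by rw [hl2, hlen'], ?_⟩
    rw [wordOp_cons, wordOp_cons, ← mul_assoc, h1, mul_assoc, h2, ← mul_assoc]

lemma swap1ST : ∀ (u : List (Fin m)) (j : Fin n), ∃ (j' : Fin n) (u' : List (Fin m)),
    u'.length = u.length ∧ wordOp ρ.S u * ρ.T j = ρ.T j' * wordOp ρ.S u' := by
  intro u
  induction u with
  | nil => exact fun j => ⟨j, [], rfl, by simp [wordOp_nil]⟩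
  | cons i u ih =>
    intro j
    obtain ⟨j₁, u₁, hlen, h1⟩ := ih j
    refine ⟨(θ (i, j₁)).2, (θ (i, j₁)).1 :: u₁, by simp [hlen], ?_⟩
    rw [wordOp_cons, wordOp_cons, mul_assoc, h1, ← mul_assoc, ρ.comm i j₁, mul_assoc]

lemma swapST : ∀ (v : List (Fin n)) (u : List (Fin m)),
    ∃ (v' : List (Fin n)) (u' : List (Fin m)),
    v'.length = v.length ∧ u'.length = u.length ∧
    wordOp ρ.S u * wordOp ρ.T v = wordOp ρ.T v' * wordOp ρ.S u' := by
  intro v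
  induction v with
  | nil => exact fun u => ⟨[], u, rfl, rfl, by simp [wordOp_nil]⟩
  | cons j v ih =>
    intro u
    obtain ⟨j', u', hlen', h1⟩ := swap1ST ρ u j
    obtain ⟨v'', u'', hl1, hl2, h2⟩ := ih u'
    refine ⟨j' :: v'', u'', by simp [hl1], by rw [hl2, hlen'], ?_⟩
    rw [wordOp_cons, wordOp_cons, ← mul_assoc, h1, mul_assoc, h2, ← mul_assoc]

variable {Λ : Type*} (ξ : HilbertBasis Λ ℂ H) (hA : ρ.AtomicBasis ξ)

include hA in
lemma atomicT : ∀ (v : List (Fin n)) (t : Λ), ∃ (c : ℂ) (t' : Λ), ‖c‖ = 1 ∧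
    wordOp ρ.T v (ξ t) = c • ξ t' := by
  intro v
  induction v with
  | nil => exact fun t => ⟨1, t, by simp, by simp [wordOp_nil]⟩
  | cons j v ih =>
    intro t
    obtain ⟨c, t₁, hc, h1⟩ := ih t
    obtain ⟨c₂, t₂, hc₂, h2⟩ := hA.2 j t₁
    refine ⟨c * c₂, t₂, by rw [norm_mul, hc, hc₂, one_mul], ?_⟩
    rw [wordOp_cons, ContinuousLinearMap.mul_apply, h1, map_smul, h2, smul_smul]

include hA in
lemma atomicS : ∀ (u : List (Fin m)) (t : Λ), ∃ (c : ℂ) (t' : Λ), ‖c‖ = 1 ∧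
    wordOp ρ.S u (ξ t) = c • ξ t' := by
  intro u
  induction u with
  | nil => exact fun t => ⟨1, t, by simp, by simp [wordOp_nil]⟩
  | cons i u ih =>
    intro t
    obtain ⟨c, t₁, hc, h1⟩ := ih t
    obtain ⟨c₂, t₂, hc₂, h2⟩ := hA.1 i t₁
    refine ⟨c * c₂, t₂, by rw [norm_mul, hc, hc₂, one_mul], ?_⟩
    rw [wordOp_cons, ContinuousLinearMap.mul_apply, h1, map_smul, h2, smul_smul]

include hA in
lemma atomicST (u : List (Fin m)) (v : List (Fin n)) (t : Λ) :
    ∃ (c : ℂ) (t' : Λ), ‖c‖ = 1 ∧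
    wordOp ρ.S u (wordOp ρ.T v (ξ t)) = c • ξ t' := by
  obtain ⟨c₁, t₁, hc₁, h1⟩ := atomicT ρ ξ hA v t
  obtain ⟨c₂, t₂, hc₂, h2⟩ := atomicS ρ ξ hA u t₁
  refine ⟨c₁ * c₂, t₂, by rw [norm_mul, hc₁, hc₂, one_mul], ?_⟩
  rw [h1, map_smul, h2, smul_smul]

/-- The disjunction of the four wandering obstructions. -/
def BadVec (x : H) : Prop :=
  ρ.HasBlueRing x ∨ ρ.HasRedRing x ∨ ρ.HasMixedRing x ∨
    ∃ (u : List (Fin m)) (v : List (Fin n)), u ≠ [] ∧ v ≠ [] ∧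
      ∃ c : ℂ, ‖c‖ = 1 ∧ wordOp ρ.S u x = c • wordOp ρ.T v x

lemma smul_invert {c : ℂ} (hc : c ≠ 0) {x y : H} (h : x = c • y) : y = c⁻¹ • x := by
  rw [h, smul_smul, inv_mul_cancel₀ hc, one_smul]

lemma len_ne_nil {α β : Type*} {a : List α} {b : List β} (h : a.length = b.length)
    (hb : b ≠ []) : a ≠ [] := by
  intro ha
  rw [ha, List.length_nil] at h
  exact hb (List.length_eq_zero_iff.mp h.symm)

lemma key2 (t : Λ) : ∀ (w : List (Fin m)) (v v' : List (Fin n)) (lam : ℂ), ‖lam‖ = 1 →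
    wordOp ρ.T v (ξ t) = lam • wordOp ρ.S w (wordOp ρ.T v' (ξ t)) →
    (w = [] ∧ v = v') ∨ BadVec ρ (ξ t) := by
  have hT := ρ.isometT
  have hS := ρ.isometS
  have hη : (ξ t) ≠ 0 := by
    have := ξ.orthonormal.1 t
    exact fun h => by simp [h] at this
  intro w v v' lam hlam heq
  have hlam0 : lam ≠ 0 := fun h => by simp [h] at hlam
  have hlaminv : ‖lam⁻¹‖ = 1 := by rw [norm_inv, hlam, inv_one]
  rcases eq_or_ne w [] with hw | hw
  · subst hw
    simp only [wordOp_nil, ContinuousLinearMap.one_apply] at heq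
    have heq' : wordOp ρ.T v (ξ t) = wordOp ρ.T v' (lam • ξ t) := by
      rw [map_smul]; exact heq
    rcases word_prefix ρ.T hT v v' _ _ hη heq' with ⟨y, rfl⟩ | ⟨y, rfl⟩
    · rw [wordOp_append_apply] at heq'
      have h3 := word_inj ρ.T hT heq'
      rw [map_smul] at h3
      rcases eq_or_ne y [] with hy | hy
      · exact Or.inl ⟨rfl, by rw [hy, List.append_nil]⟩
      · refine Or.inr (Or.inr (Or.inl ⟨y, hy, lam⁻¹, hlaminv, ?_⟩))
        exact smul_invert hlam0 h3
    · rw [wordOp_append_apply] at heq'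
      have h3 := word_inj ρ.T hT heq'
      rcases eq_or_ne y [] with hy | hy
      · exact Or.inl ⟨rfl, by rw [hy, List.append_nil]⟩
      · exact Or.inr (Or.inr (Or.inl ⟨y, hy, lam, hlam, h3⟩))
  · rcases eq_or_ne v' [] with hv' | hv'
    · subst hv'
      simp only [wordOp_nil, ContinuousLinearMap.one_apply] at heq
      rcases eq_or_ne v [] with hv | hv
      · subst hv
        simp only [wordOp_nil, ContinuousLinearMap.one_apply] at heq
        refine Or.inr (Or.inl ⟨w, hw, lam⁻¹, hlaminv, ?_⟩)
        exact smul_invert hlam0 heq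
      · refine Or.inr (Or.inr (Or.inr (Or.inr ⟨w, v, hw, hv, lam⁻¹, hlaminv, ?_⟩)))
        exact smul_invert hlam0 heq
    · obtain ⟨y, x, hly, hlx, hswap⟩ := swapST ρ v' w
      have hx : x ≠ [] := len_ne_nil hlx hw
      have hy0 : y ≠ [] := len_ne_nil hly hv'
      have heq2 : wordOp ρ.T v (ξ t) = lam • wordOp ρ.T y (wordOp ρ.S x (ξ t)) := by
        rw [heq, ← ContinuousLinearMap.mul_apply, hswap, ContinuousLinearMap.mul_apply]
      have heq3 : wordOp ρ.T v (ξ t) = wordOp ρ.T y (lam • wordOp ρ.S x (ξ t)) := by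
        rw [map_smul]; exact heq2
      rcases word_prefix ρ.T hT v y _ _ hη heq3 with ⟨z, rfl⟩ | ⟨z, rfl⟩
      · rw [wordOp_append_apply] at heq3
        have h3 := word_inj ρ.T hT heq3
        rw [map_smul] at h3
        rcases eq_or_ne z [] with hz | hz
        · subst hz
          simp only [wordOp_nil, ContinuousLinearMap.one_apply] at h3
          refine Or.inr (Or.inl ⟨x, hx, lam⁻¹, hlaminv, ?_⟩)
          exact smul_invert hlam0 h3
        · refine Or.inr (Or.inr (Or.inr (Or.inl ⟨x, z, hx, hz, lam⁻¹, hlaminv, ?_⟩)))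
          exact smul_invert hlam0 h3
      · rw [wordOp_append_apply] at heq3
        have h3 := word_inj ρ.T hT heq3
        rcases eq_or_ne z [] with hz | hz
        · subst hz
          simp only [wordOp_nil, ContinuousLinearMap.one_apply] at h3
          refine Or.inr (Or.inl ⟨x, hx, lam⁻¹, hlaminv, ?_⟩)
          exact smul_invert hlam0 h3
        · refine Or.inr (Or.inr (Or.inr (Or.inr ⟨x, z, hx, hz, lam⁻¹, hlaminv, ?_⟩)))
          exact smul_invert hlam0 h3

lemma keyLemma (t : Λ) (u u' : List (Fin m)) (v v' : List (Fin n)) (lam : ℂ)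
    (hlam : ‖lam‖ = 1)
    (heq : wordOp ρ.S u (wordOp ρ.T v (ξ t)) =
      lam • wordOp ρ.S u' (wordOp ρ.T v' (ξ t))) :
    (u = u' ∧ v = v') ∨ BadVec ρ (ξ t) := by
  have hS := ρ.isometS
  have hT := ρ.isometT
  have hη : (ξ t) ≠ 0 := by
    have := ξ.orthonormal.1 t
    exact fun h => by simp [h] at this
  have hlam0 : lam ≠ 0 := fun h => by simp [h] at hlam
  have hlaminv : ‖lam⁻¹‖ = 1 := by rw [norm_inv, hlam, inv_one]
  have hv0 : wordOp ρ.T v (ξ t) ≠ 0 := word_ne_zero ρ.T hT hη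
  have heq' : wordOp ρ.S u (wordOp ρ.T v (ξ t)) =
      wordOp ρ.S u' (lam • wordOp ρ.T v' (ξ t)) := by
    rw [map_smul]; exact heq
  rcases word_prefix ρ.S hS u u' _ _ hv0 heq' with ⟨w, rfl⟩ | ⟨w, rfl⟩
  · rw [wordOp_append_apply] at heq'
    have h2 := word_inj ρ.S hS heq'
    rw [map_smul] at h2
    rcases key2 ρ ξ t w v v' lam hlam h2 with ⟨hw, hv⟩ | hbad
    · exact Or.inl ⟨by rw [hw, List.append_nil], hv⟩
    · exact Or.inr hbad
  · rw [wordOp_append_apply] at heq'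
    have h2 := word_inj ρ.S hS heq'
    have h3 := smul_invert hlam0 h2
    rcases key2 ρ ξ t w v' v lam⁻¹ hlaminv h3 with ⟨hw, hv⟩ | hbad
    · exact Or.inl ⟨by rw [hw, List.append_nil], hv.symm⟩
    · exact Or.inr hbad

end RepAux

/-- A standard basis vector of an atomic representation is wandering iff it satisfies none of
the conditions (W1)-(W4). -/
theorem statement19 {m n : ℕ} (hm : 0 < m) (hn : 0 < n) (hmn : 2 ≤ m ∨ 2 ≤ n)
    {θ : Equiv.Perm (Fin m × Fin n)} {H : Type*}
    [NormedAddCommGroup H] [InnerProductSpace ℂ H] [CompleteSpace H]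
    (ρ : TwoGraphRep m n θ H)
    {Λ : Type*} (ξ : HilbertBasis Λ ℂ H) (hAtomic : ρ.AtomicBasis ξ) (t : Λ) :
    ρ.IsWanderingRep (ξ t) ↔
      ¬ (ρ.HasBlueRing (ξ t) ∨ ρ.HasRedRing (ξ t) ∨ ρ.HasMixedRing (ξ t) ∨
        ∃ (u : List (Fin m)) (v : List (Fin n)), u ≠ [] ∧ v ≠ [] ∧
          ∃ c : ℂ, ‖c‖ = 1 ∧ wordOp ρ.S u (ξ t) = c • wordOp ρ.T v (ξ t)) := by
  classical
  have hS := ρ.isometS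
  have hT := ρ.isometT
  have hbb : ∀ s s' : Λ, ⟪ξ s, ξ s'⟫_ℂ = if s = s' then 1 else 0 :=
    orthonormal_iff_ite.mp ξ.orthonormal
  have h11 : ⟪ξ t, ξ t⟫_ℂ = 1 := by rw [hbb t t, if_pos rfl]
  have hcontra : ∀ c : ℂ, ‖c‖ = 1 → (starRingEnd ℂ) c = 0 → False := by
    intro c hc h0
    rw [starRingEnd_apply, star_eq_zero] at h0
    rw [h0, norm_zero] at hc
    exact zero_ne_one hc
  constructor
  · rintro ⟨hnorm, hw⟩ hbad
    rcases hbad with ⟨u, hu, c, hc, heq⟩ | ⟨v, hv, c, hc, heq⟩ |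
      ⟨u, v, hu, hv, c, hc, heq⟩ | ⟨u, v, hu, hv, c, hc, heq⟩
    · have h0 := hw u [] [] []
      rw [if_neg (by simp [hu])] at h0
      simp only [wordOp_nil, mul_one, one_mul, ContinuousLinearMap.one_apply] at h0
      rw [heq, inner_smul_left, h11, mul_one] at h0
      exact hcontra c hc h0
    · have h0 := hw [] [] v []
      rw [if_neg (by simp [hv])] at h0
      simp only [wordOp_nil, mul_one, one_mul, ContinuousLinearMap.one_apply] at h0
      rw [heq, inner_smul_left, h11, mul_one] at h0
      exact hcontra c hc h0
    · obtain ⟨u', v', hlu, hlv, hswap⟩ := swapTS ρ u v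
      have hu' : u' ≠ [] := len_ne_nil hlu hu
      have heq2 : (wordOp ρ.S u' * wordOp ρ.T v') (ξ t) = c • ξ t := by
        rw [← hswap, ContinuousLinearMap.mul_apply]; exact heq
      have h0 := hw u' [] v' []
      rw [if_neg (by simp [hu'])] at h0
      simp only [wordOp_nil, mul_one, one_mul, ContinuousLinearMap.one_apply] at h0
      rw [heq2, inner_smul_left, h11, mul_one] at h0
      exact hcontra c hc h0
    · have h0 := hw u [] [] v
      rw [if_neg (by simp [hu])] at h0
      simp only [wordOp_nil, mul_one, one_mul, ContinuousLinearMap.one_apply] at h0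
      rw [heq, inner_smul_left, word_inner ρ.T hT v, h11, mul_one] at h0
      exact hcontra c hc h0
  · intro hnot
    refine ⟨ξ.orthonormal.1 t, ?_⟩
    intro u u' v v'
    obtain ⟨c, s, hc, hcs⟩ := atomicST ρ ξ hAtomic u v t
    obtain ⟨c', s', hc', hcs'⟩ := atomicST ρ ξ hAtomic u' v' t
    have hc0 : c ≠ 0 := fun h => by simp [h] at hc
    have hc'0 : c' ≠ 0 := fun h => by simp [h] at hc'
    simp only [ContinuousLinearMap.mul_apply]
    by_cases hss : s = s'
    · subst hss
      have heq : wordOp ρ.S u (wordOp ρ.T v (ξ t)) =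
          (c * c'⁻¹) • wordOp ρ.S u' (wordOp ρ.T v' (ξ t)) := by
        rw [hcs, hcs', smul_smul, mul_assoc, inv_mul_cancel₀ hc'0, mul_one]
      have hnn : ‖c * c'⁻¹‖ = 1 := by rw [norm_mul, norm_inv, hc, hc', inv_one, mul_one]
      rcases keyLemma ρ ξ t u u' v v' _ hnn heq with ⟨hu, hv⟩ | hbad
      · rw [if_pos ⟨hu, hv⟩]
        subst hu; subst hv
        have hξne : ξ s ≠ 0 := by
          have := ξ.orthonormal.1 s
          exact fun h => by simp [h] at this
        rw [hcs, inner_smul_left, inner_smul_right, hbb s s, if_pos rfl,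
          mul_one, Complex.conj_mul', hc]
        norm_num
      · exact absurd hbad hnot
    · have hne : ¬(u = u' ∧ v = v') := by
        rintro ⟨rfl, rfl⟩
        have h2 : c • ξ s = c' • ξ s' := hcs.symm.trans hcs'
        have h3 := congrArg (fun z => ⟪ξ s, z⟫_ℂ) h2
        simp only [inner_smul_right] at h3
        rw [hbb s s, hbb s s', if_pos rfl, if_neg hss, mul_one, mul_zero] at h3
        exact hc0 h3
      rw [if_neg hne, hcs, hcs', inner_smul_left, inner_smul_right, hbb s s',
        if_neg hss, mul_zero, mul_zero]
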